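/- For the affine-min interference mapping T(p)_n = min_{d ∈ D_n}(⟨z_{n,d}, p⟩ + σ_{n,d}) with z_{n,d} ≥ 0 having zero n-th coordinate and σ_{n,d} > 0, the conditional eigenvalue problem T(p) = λ p, p > 0, max_n p_n = pmax has a solution: there exist λ > 0 and p > 0 with max_n p_n = pmax satisfying T(p) = λp. -/

import Mathlib

open Matrix

section Aux

variable {N : ℕ} [Nonempty (Fin N)] {D : Fin N → Type} [∀ n, Fintype (D n)]
  [∀ n, Nonempty (D n)]

/-- The affine-min interference map. -/
noncomputable def Tmap (z : ∀ n, D n → (Fin N → ℝ)) (σ : ∀ n, D n → ℝ)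
    (p : Fin N → ℝ) : Fin N → ℝ :=
  fun n => Finset.univ.inf' Finset.univ_nonempty (fun d : D n => z n d ⬝ᵥ p + σ n d)

variable {z : ∀ n, D n → (Fin N → ℝ)} {σ : ∀ n, D n → ℝ}

lemma Tmap_le (p : Fin N → ℝ) (n : Fin N) (d : D n) :
    Tmap z σ p n ≤ z n d ⬝ᵥ p + σ n d :=
  Finset.inf'_le _ (Finset.mem_univ d)

lemma le_Tmap {c : ℝ} {p : Fin N → ℝ} {n : Fin N}
    (h : ∀ d, c ≤ z n d ⬝ᵥ p + σ n d) : c ≤ Tmap z σ p n :=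
  Finset.le_inf' _ _ fun d _ => h d

lemma Tmap_mono (hz : ∀ n d i, 0 ≤ z n d i) {p q : Fin N → ℝ}
    (h : ∀ i, p i ≤ q i) (n : Fin N) : Tmap z σ p n ≤ Tmap z σ q n := by
  apply le_Tmap
  intro d
  refine le_trans (Tmap_le p n d) (add_le_add_left ?_ _)
  exact Finset.sum_le_sum fun i _ => mul_le_mul_of_nonneg_left (h i) (hz n d i)

lemma smin_le_Tmap (hz : ∀ n d i, 0 ≤ z n d i) {p : Fin N → ℝ}
    (hp : ∀ i, 0 ≤ p i) (n : Fin N) :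
    Finset.univ.inf' Finset.univ_nonempty (σ n) ≤ Tmap z σ p n := by
  apply le_Tmap
  intro d
  have h1 : (0 : ℝ) ≤ z n d ⬝ᵥ p :=
    Finset.sum_nonneg fun i _ => mul_nonneg (hz n d i) (hp i)
  have h2 : Finset.univ.inf' Finset.univ_nonempty (σ n) ≤ σ n d :=
    Finset.inf'_le _ (Finset.mem_univ d)
  linarith

lemma smin_pos (hσ : ∀ n d, 0 < σ n d) (n : Fin N) :
    0 < Finset.univ.inf' Finset.univ_nonempty (σ n) := by
  rw [Finset.lt_inf'_iff]
  exact fun d _ => hσ n d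

lemma Tmap_pos (hz : ∀ n d i, 0 ≤ z n d i) (hσ : ∀ n d, 0 < σ n d)
    {p : Fin N → ℝ} (hp : ∀ i, 0 ≤ p i) (n : Fin N) : 0 < Tmap z σ p n :=
  lt_of_lt_of_le (smin_pos hσ n) (smin_le_Tmap hz hp n)

lemma Tmap_continuous (n : Fin N) : Continuous fun p => Tmap z σ p n := by
  apply Continuous.finset_inf'_apply
  intro d _
  exact ((continuous_finset_sum _ fun i _ => continuous_const.mul (continuous_apply i)).add
    continuous_const)

lemma Tmap_subhom (hz : ∀ n d i, 0 ≤ z n d i) (hσ : ∀ n d, 0 < σ n d)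
    {c : ℝ} (hc : 1 < c) {q : Fin N → ℝ} (hq : ∀ i, 0 ≤ q i) (n : Fin N) :
    Tmap z σ (fun i => c * q i) n < c * Tmap z σ q n := by
  obtain ⟨d, -, hd⟩ := Finset.exists_mem_eq_inf' (Finset.univ_nonempty)
    (fun d : D n => z n d ⬝ᵥ q + σ n d)
  have h1 : Tmap z σ (fun i => c * q i) n ≤ z n d ⬝ᵥ (fun i => c * q i) + σ n d :=
    Tmap_le _ n d
  have h2 : z n d ⬝ᵥ (fun i => c * q i) = c * (z n d ⬝ᵥ q) := by
    simp only [dotProduct, Finset.mul_sum]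
    exact Finset.sum_congr rfl fun i _ => by ring
  have h3 : σ n d < c * σ n d := (lt_mul_iff_one_lt_left (hσ n d)).mpr hc
  have h4 : Tmap z σ q n = z n d ⬝ᵥ q + σ n d := hd
  calc Tmap z σ (fun i => c * q i) n ≤ c * (z n d ⬝ᵥ q) + σ n d := by rw [← h2]; exact h1
    _ < c * (z n d ⬝ᵥ q) + c * σ n d := by linarith
    _ = c * (z n d ⬝ᵥ q + σ n d) := by ring
    _ = c * Tmap z σ q n := by rw [h4]

/-- Existence of the greatest fixed point of `p ↦ min (T p / l, pmax)`. -/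
lemma exists_fp (hz : ∀ n d i, 0 ≤ z n d i) (hσ : ∀ n d, 0 < σ n d)
    {pmax : ℝ} (hpmax : 0 < pmax) {l : ℝ} (hl : 0 < l) :
    ∃ P : Fin N → ℝ, (∀ i, 0 ≤ P i) ∧
      (∀ i, P i = min (Tmap z σ P i / l) pmax) ∧
      (∀ q : Fin N → ℝ, (∀ i, 0 ≤ q i) →
        (∀ i, q i ≤ min (Tmap z σ q i / l) pmax) → ∀ i, q i ≤ P i) := by
  classical
  set S : Set (Fin N → ℝ) :=
    {q | (∀ i, 0 ≤ q i) ∧ ∀ i, q i ≤ min (Tmap z σ q i / l) pmax} with hS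
  have h0S : (fun _ => (0 : ℝ)) ∈ S := by
    constructor
    · intro i; exact le_rfl
    · intro i
      have := Tmap_pos hz hσ (p := fun _ => (0:ℝ)) (fun _ => le_rfl) i
      exact le_min (le_of_lt (div_pos this hl)) (le_of_lt hpmax)
  have hbd : ∀ q ∈ S, ∀ i, q i ≤ pmax := fun q hq i => (hq.2 i).trans (min_le_right _ _)
  set P : Fin N → ℝ := fun n => sSup ((fun q => q n) '' S) with hPdef
  have hne : ∀ n, ((fun q : Fin N → ℝ => q n) '' S).Nonempty :=
    fun n => ⟨0, ⟨fun _ => 0, h0S, rfl⟩⟩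
  have hbdd : ∀ n, BddAbove ((fun q : Fin N → ℝ => q n) '' S) := by
    intro n
    refine ⟨pmax, ?_⟩
    rintro x ⟨q, hq, rfl⟩
    exact hbd q hq n
  have hle : ∀ q ∈ S, ∀ n, q n ≤ P n :=
    fun q hq n => le_csSup (hbdd n) ⟨q, hq, rfl⟩
  have hP0 : ∀ i, (0 : ℝ) ≤ P i := fun i => hle _ h0S i
  have hPmax : ∀ i, P i ≤ pmax := by
    intro i
    apply csSup_le (hne i)
    rintro x ⟨q, hq, rfl⟩
    exact hbd q hq i
  have hPF : ∀ n, P n ≤ min (Tmap z σ P n / l) pmax := by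
    intro n
    apply csSup_le (hne n)
    rintro x ⟨q, hq, rfl⟩
    refine (hq.2 n).trans (min_le_min ?_ le_rfl)
    exact div_le_div_of_nonneg_right (Tmap_mono hz (fun i => hle q hq i) n) hl.le
  set P' : Fin N → ℝ := fun n => min (Tmap z σ P n / l) pmax with hP'def
  have hP'0 : ∀ i, (0:ℝ) ≤ P' i := by
    intro i
    exact le_min (le_of_lt (div_pos (Tmap_pos hz hσ hP0 i) hl)) (le_of_lt hpmax)
  have hP'S : P' ∈ S := by
    refine ⟨hP'0, fun n => min_le_min ?_ le_rfl⟩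
    exact div_le_div_of_nonneg_right (Tmap_mono hz (fun i => hPF i) n) hl.le
  have hP'le : ∀ i, P' i ≤ P i := fun i => hle P' hP'S i
  exact ⟨P, hP0, fun i => le_antisymm (hPF i) (hP'le i),
    fun q hq0 hqF i => hle q ⟨hq0, hqF⟩ i⟩

lemma fp_pos (hz : ∀ n d i, 0 ≤ z n d i) (hσ : ∀ n d, 0 < σ n d)
    {pmax : ℝ} (hpmax : 0 < pmax) {l : ℝ} (hl : 0 < l) {P : Fin N → ℝ}
    (hP0 : ∀ i, 0 ≤ P i) (hPeq : ∀ i, P i = min (Tmap z σ P i / l) pmax) :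
    ∀ i, 0 < P i := by
  intro i
  rw [hPeq i]
  exact lt_min (div_pos (Tmap_pos hz hσ hP0 i) hl) hpmax

/-- Uniqueness (comparison) of fixed points of `p ↦ min (T p / l, pmax)`. -/
lemma fp_le (hz : ∀ n d i, 0 ≤ z n d i) (hσ : ∀ n d, 0 < σ n d)
    {pmax : ℝ} (hpmax : 0 < pmax) {l : ℝ} (hl : 0 < l) {p q : Fin N → ℝ}
    (hp0 : ∀ i, 0 ≤ p i) (hq0 : ∀ i, 0 ≤ q i)
    (hp : ∀ i, p i = min (Tmap z σ p i / l) pmax)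
    (hq : ∀ i, q i = min (Tmap z σ q i / l) pmax) :
    ∀ i, p i ≤ q i := by
  classical
  have hqpos : ∀ i, 0 < q i := fp_pos hz hσ hpmax hl hq0 hq
  have hple : ∀ i, p i ≤ pmax := fun i => (hp i).trans_le (min_le_right _ _)
  by_contra hcon
  push_neg at hcon
  obtain ⟨i0, hi0⟩ := hcon
  set c : ℝ := Finset.univ.sup' Finset.univ_nonempty (fun i => p i / q i) with hc
  obtain ⟨n, -, hn⟩ := Finset.exists_mem_eq_sup' (Finset.univ_nonempty)
    (fun i => p i / q i)
  have hc1 : 1 < c := by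
    have h1 : p i0 / q i0 ≤ c := hc ▸ Finset.le_sup' (fun i => p i / q i) (Finset.mem_univ i0)
    have h2 : 1 < p i0 / q i0 := (one_lt_div (hqpos i0)).mpr hi0
    linarith
  have hlec : ∀ i, p i ≤ c * q i := by
    intro i
    have h1 : p i / q i ≤ c := hc ▸ Finset.le_sup' (fun i => p i / q i) (Finset.mem_univ i)
    exact (div_le_iff₀ (hqpos i)).mp h1
  have hpn : p n = c * q n := by
    have h1 : c = p n / q n := hn
    rw [h1, div_mul_cancel₀ _ (hqpos n).ne']
  have hqn_lt : q n < pmax := by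
    have h1 : q n = p n / c := by
      rw [hpn]; field_simp
    calc q n = p n / c := h1
      _ ≤ pmax / c := div_le_div_of_nonneg_right (hple n) (lt_trans one_pos hc1).le
      _ < pmax := div_lt_self hpmax hc1
  have hqe : q n = Tmap z σ q n / l := by
    rcases min_cases (Tmap z σ q n / l) pmax with ⟨h1, -⟩ | ⟨h1, -⟩
    · rw [hq n, h1]
    · exfalso; rw [hq n, h1] at hqn_lt; exact lt_irrefl _ hqn_lt
  have h1 : p n ≤ Tmap z σ p n / l := (hp n).trans_le (min_le_left _ _)
  have h2 : Tmap z σ p n ≤ Tmap z σ (fun i => c * q i) n := Tmap_mono hz hlec n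
  have h3 : Tmap z σ (fun i => c * q i) n < c * Tmap z σ q n :=
    Tmap_subhom hz hσ hc1 hq0 n
  have h4 : Tmap z σ p n / l < c * Tmap z σ q n / l :=
    (div_lt_div_iff_of_pos_right hl).mpr (lt_of_le_of_lt h2 h3)
  have h5 : p n < p n := by
    calc p n ≤ Tmap z σ p n / l := h1
      _ < c * Tmap z σ q n / l := h4
      _ = c * (Tmap z σ q n / l) := by ring
      _ = c * q n := by rw [← hqe]
      _ = p n := hpn.symm
  exact lt_irrefl _ h5

end Aux

/-- For the affine-min interference mapping
`T(p)_n = min_{d ∈ D_n} (⟨z_{n,d}, p⟩ + σ_{n,d})` with `z_{n,d} ≥ 0` having zero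
`n`-th coordinate and `σ_{n,d} > 0`, the conditional eigenvalue problem
`T(p) = λ p`, `p > 0`, `max_n p_n = pmax` has a solution. -/
theorem stmt_11 {N : ℕ} (hN : 1 ≤ N) (pmax : ℝ) (hpmax : 0 < pmax)
    (D : Fin N → Type) [∀ n, Fintype (D n)] [∀ n, Nonempty (D n)]
    (z : ∀ n, D n → (Fin N → ℝ)) (σ : ∀ n, D n → ℝ)
    (hz : ∀ n d i, 0 ≤ z n d i) (hzn : ∀ n d, z n d n = 0)
    (hσ : ∀ n d, 0 < σ n d) :
    ∃ lam : ℝ, 0 < lam ∧ ∃ p : Fin N → ℝ,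
      (∀ i, 0 < p i) ∧ (∀ i, p i ≤ pmax) ∧ (∃ i, p i = pmax) ∧
      ∀ n : Fin N,
        Finset.univ.inf' Finset.univ_nonempty (fun d : D n => z n d ⬝ᵥ p + σ n d) =
          lam * p n := by
  classical
  haveI : Nonempty (Fin N) := ⟨⟨0, hN⟩⟩
  -- the family of greatest fixed points of `p ↦ min (T p / l, pmax)`
  have hex : ∀ l : ℝ, ∃ P : Fin N → ℝ, 0 < l →
      (∀ i, 0 ≤ P i) ∧ (∀ i, P i = min (Tmap z σ P i / l) pmax) ∧
      (∀ q : Fin N → ℝ, (∀ i, 0 ≤ q i) →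
        (∀ i, q i ≤ min (Tmap z σ q i / l) pmax) → ∀ i, q i ≤ P i) := by
    intro l
    by_cases hl : 0 < l
    · obtain ⟨P, h1, h2, h3⟩ := exists_fp hz hσ hpmax hl
      exact ⟨P, fun _ => ⟨h1, h2, h3⟩⟩
    · exact ⟨0, fun h => absurd h hl⟩
  choose Pf hPf using hex
  have hPf0 : ∀ {l : ℝ}, 0 < l → ∀ i, 0 ≤ Pf l i := fun hl => (hPf _ hl).1
  have hPfeq : ∀ {l : ℝ}, 0 < l → ∀ i, Pf l i = min (Tmap z σ (Pf l) i / l) pmax :=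
    fun hl => (hPf _ hl).2.1
  have hPfgfp : ∀ {l : ℝ}, 0 < l → ∀ q : Fin N → ℝ, (∀ i, 0 ≤ q i) →
      (∀ i, q i ≤ min (Tmap z σ q i / l) pmax) → ∀ i, q i ≤ Pf l i :=
    fun hl => (hPf _ hl).2.2
  have hPfle : ∀ {l : ℝ}, 0 < l → ∀ i, Pf l i ≤ pmax :=
    fun hl i => (hPfeq hl i).trans_le (min_le_right _ _)
  have hPfpos : ∀ {l : ℝ}, 0 < l → ∀ i, 0 < Pf l i :=
    fun hl => fp_pos hz hσ hpmax hl (hPf0 hl) (hPfeq hl)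
  -- monotonicity in l
  have hPmono : ∀ {l m : ℝ}, 0 < l → l ≤ m → ∀ i, Pf m i ≤ Pf l i := by
    intro l m hl hlm i
    have hm : 0 < m := lt_of_lt_of_le hl hlm
    refine hPfgfp hl (Pf m) (hPf0 hm) (fun j => ?_) i
    have h2 : Tmap z σ (Pf m) j / m ≤ Tmap z σ (Pf m) j / l :=
      div_le_div_of_nonneg_left (Tmap_pos hz hσ (hPf0 hm) j).le hl hlm
    calc Pf m j = min (Tmap z σ (Pf m) j / m) pmax := hPfeq hm j
      _ ≤ min (Tmap z σ (Pf m) j / l) pmax := min_le_min h2 le_rfl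
  set A : Set ℝ := {l | 0 < l ∧ ∃ n, Pf l n = pmax} with hA
  -- a small element of A
  have hs0pos : 0 < Finset.univ.inf' Finset.univ_nonempty
      (fun n : Fin N => Finset.univ.inf' Finset.univ_nonempty (σ n)) := by
    rw [Finset.lt_inf'_iff]
    exact fun n _ => smin_pos hσ n
  set s0 : ℝ := Finset.univ.inf' Finset.univ_nonempty
      (fun n : Fin N => Finset.univ.inf' Finset.univ_nonempty (σ n)) with hs0
  have hl0pos : 0 < s0 / pmax := div_pos hs0pos hpmax
  have hl0 : s0 / pmax ∈ A := by
    refine ⟨hl0pos, ?_⟩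
    have hsub : ∀ i, (fun _ : Fin N => pmax) i ≤
        min (Tmap z σ (fun _ => pmax) i / (s0 / pmax)) pmax := by
      intro i
      refine le_min ?_ le_rfl
      have h1 : s0 ≤ Tmap z σ (fun _ => pmax) i := by
        refine le_trans ?_ (smin_le_Tmap hz (fun _ => hpmax.le) i)
        exact Finset.inf'_le _ (Finset.mem_univ i)
      rw [le_div_iff₀ hl0pos]
      calc pmax * (s0 / pmax) = s0 := by field_simp
        _ ≤ _ := h1
    have hge := hPfgfp hl0pos (fun _ => pmax) (fun _ => hpmax.le) hsub
    exact ⟨⟨0, hN⟩, le_antisymm (hPfle hl0pos _) (hge _)⟩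
  -- A is bounded above
  have hbd : BddAbove A := by
    set B : ℝ := Finset.univ.sup' Finset.univ_nonempty
      (fun n : Fin N => (∑ i, z n (Classical.arbitrary (D n)) i) * pmax +
        σ n (Classical.arbitrary (D n))) with hB
    refine ⟨B / pmax, ?_⟩
    rintro l ⟨hl, n, hn⟩
    have h1 : pmax ≤ Tmap z σ (Pf l) n / l := by
      have h0 := hPfeq hl n
      rw [hn] at h0
      exact h0.trans_le (min_le_left _ _)
    have h2 : l * pmax ≤ Tmap z σ (Pf l) n := by
      rw [mul_comm]
      exact (le_div_iff₀ hl).mp h1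
    have h3 : Tmap z σ (Pf l) n ≤ B := by
      have h4 : Tmap z σ (Pf l) n ≤
          z n (Classical.arbitrary (D n)) ⬝ᵥ (Pf l) + σ n (Classical.arbitrary (D n)) :=
        Tmap_le _ n _
      have h5 : z n (Classical.arbitrary (D n)) ⬝ᵥ (Pf l) ≤
          ∑ i, z n (Classical.arbitrary (D n)) i * pmax :=
        Finset.sum_le_sum fun i _ =>
          mul_le_mul_of_nonneg_left (hPfle hl i) (hz n _ i)
      have h6 : (∑ i, z n (Classical.arbitrary (D n)) i * pmax) =
          (∑ i, z n (Classical.arbitrary (D n)) i) * pmax := by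
        rw [Finset.sum_mul]
      have h7 : (∑ i, z n (Classical.arbitrary (D n)) i) * pmax +
          σ n (Classical.arbitrary (D n)) ≤ B :=
        hB ▸ Finset.le_sup' (fun n : Fin N =>
          (∑ i, z n (Classical.arbitrary (D n)) i) * pmax +
            σ n (Classical.arbitrary (D n))) (Finset.mem_univ n)
      calc Tmap z σ (Pf l) n ≤ _ + σ n (Classical.arbitrary (D n)) := h4
        _ ≤ (∑ i, z n (Classical.arbitrary (D n)) i * pmax) +
            σ n (Classical.arbitrary (D n)) := by linarith
        _ ≤ B := by rw [h6]; exact h7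
    exact (le_div_iff₀ hpmax).mpr (le_trans h2 h3)
  set lstar : ℝ := sSup A with hlstar
  have hAne : A.Nonempty := ⟨_, hl0⟩
  have hlstarpos : 0 < lstar := lt_of_lt_of_le hl0pos (le_csSup hbd hl0)
  have h_below : ∀ μ : ℝ, 0 < μ → μ < lstar → ∃ n, Pf μ n = pmax := by
    intro μ hμ hlt
    obtain ⟨l, hlA, hl⟩ := exists_lt_of_lt_csSup hAne hlt
    obtain ⟨hlpos, n, hn⟩ := hlA
    refine ⟨n, le_antisymm (hPfle hμ n) ?_⟩
    calc pmax = Pf l n := hn.symm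
      _ ≤ Pf μ n := hPmono hμ hl.le n
  have h_above : ∀ l : ℝ, lstar < l → ∀ n, Pf l n < pmax := by
    intro l hl n
    have hlpos : 0 < l := lt_trans hlstarpos hl
    rcases lt_or_eq_of_le (hPfle hlpos n) with h | h
    · exact h
    · exact absurd (le_csSup hbd ⟨hlpos, n, h⟩) (not_le.mpr hl)
  -- ===== right sequence =====
  set lam0 : ℕ → ℝ := fun k => lstar + ((k : ℝ) + 1)⁻¹ with hlamdef
  have hlam_gt : ∀ k, lstar < lam0 k := by
    intro k
    have : (0:ℝ) < ((k:ℝ) + 1)⁻¹ := by positivity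
    simp only [hlamdef]
    linarith
  have hlam_pos : ∀ k, 0 < lam0 k := fun k => lt_trans hlstarpos (hlam_gt k)
  have hlam_anti : Antitone lam0 := by
    intro a b hab
    have hcast : (a : ℝ) ≤ (b : ℝ) := Nat.cast_le.mpr hab
    have h1 : ((b:ℝ) + 1)⁻¹ ≤ ((a:ℝ) + 1)⁻¹ :=
      inv_anti₀ (by positivity) (by linarith)
    simp only [hlamdef]
    linarith
  have hlam_tend : Filter.Tendsto lam0 Filter.atTop (nhds lstar) := by
    have h1 : Filter.Tendsto (fun k : ℕ => ((k:ℝ) + 1)⁻¹) Filter.atTop (nhds 0) := by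
      apply Filter.Tendsto.inv_tendsto_atTop
      exact Filter.tendsto_atTop_add_const_right _ 1 tendsto_natCast_atTop_atTop
    have h2 := Filter.Tendsto.const_add lstar h1
    simpa [hlamdef] using h2
  have hpk_mono : ∀ i, Monotone fun k => Pf (lam0 k) i := by
    intro i a b hab
    exact hPmono (hlam_pos b) (hlam_anti hab) i
  have hpk_bdd : ∀ i, BddAbove (Set.range fun k => Pf (lam0 k) i) := by
    intro i
    refine ⟨pmax, ?_⟩
    rintro x ⟨k, rfl⟩
    exact hPfle (hlam_pos k) i
  set q : Fin N → ℝ := fun i => ⨆ k, Pf (lam0 k) i with hqdef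
  have hq_tend : ∀ i, Filter.Tendsto (fun k => Pf (lam0 k) i) Filter.atTop (nhds (q i)) := by
    intro i
    simp only [hqdef]
    exact tendsto_atTop_ciSup (hpk_mono i) (hpk_bdd i)
  have hq_tendp : Filter.Tendsto (fun k => Pf (lam0 k)) Filter.atTop (nhds q) :=
    tendsto_pi_nhds.mpr hq_tend
  have hqpos : ∀ i, 0 < q i := by
    intro i
    have h1 : Pf (lam0 0) i ≤ q i := by
      simp only [hqdef]
      exact le_ciSup (hpk_bdd i) 0
    exact lt_of_lt_of_le (hPfpos (hlam_pos 0) i) h1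
  have hq0 : ∀ i, 0 ≤ q i := fun i => (hqpos i).le
  have hqle : ∀ i, q i ≤ pmax := by
    intro i
    simp only [hqdef]
    exact ciSup_le fun k => hPfle (hlam_pos k) i
  have heig : ∀ n, Tmap z σ q n = lstar * q n := by
    intro n
    have hk : ∀ k, Tmap z σ (Pf (lam0 k)) n = lam0 k * Pf (lam0 k) n := by
      intro k
      have h1 := hPfeq (hlam_pos k) n
      have h2 := h_above (lam0 k) (hlam_gt k) n
      rcases min_cases (Tmap z σ (Pf (lam0 k)) n / lam0 k) pmax with ⟨h3, -⟩ | ⟨h3, -⟩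
      · rw [h3] at h1
        rw [h1]
        rw [mul_div_assoc']; exact (mul_div_cancel_left₀ _ (hlam_pos k).ne').symm
      · rw [h3] at h1
        exact absurd h1 (ne_of_lt h2)
    have t1 : Filter.Tendsto (fun k => Tmap z σ (Pf (lam0 k)) n) Filter.atTop
        (nhds (Tmap z σ q n)) :=
      ((Tmap_continuous n).tendsto q).comp hq_tendp
    have t2 : Filter.Tendsto (fun k => lam0 k * Pf (lam0 k) n) Filter.atTop
        (nhds (lstar * q n)) :=
      hlam_tend.mul (hq_tend n)
    refine tendsto_nhds_unique ?_ t2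
    exact t1.congr fun k => hk k
  have hq_fp : ∀ i, q i = min (Tmap z σ q i / lstar) pmax := by
    intro i
    rw [heig i, mul_div_cancel_left₀ _ hlstarpos.ne']
    exact (min_eq_left (hqle i)).symm
  -- ===== left sequence =====
  set mu : ℕ → ℝ := fun k => lstar * (1 - ((k:ℝ) + 2)⁻¹) with hmudef
  have hfrac_pos : ∀ k : ℕ, (0:ℝ) < ((k:ℝ) + 2)⁻¹ := fun k => by positivity
  have hfrac_lt : ∀ k : ℕ, ((k:ℝ) + 2)⁻¹ < 1 := fun k =>
    inv_lt_one_of_one_lt₀ (by have := Nat.cast_nonneg (α := ℝ) k; linarith)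
  have hmu_pos : ∀ k, 0 < mu k := by
    intro k
    have := hfrac_lt k
    simp only [hmudef]
    have h1 : (0:ℝ) < 1 - ((k:ℝ) + 2)⁻¹ := by linarith
    exact mul_pos hlstarpos h1
  have hmu_lt : ∀ k, mu k < lstar := by
    intro k
    have h1 : 1 - ((k:ℝ) + 2)⁻¹ < 1 := by linarith [hfrac_pos k]
    simp only [hmudef]
    calc lstar * (1 - ((k:ℝ) + 2)⁻¹) < lstar * 1 :=
        mul_lt_mul_of_pos_left h1 hlstarpos
      _ = lstar := mul_one _
  have hmu_mono : Monotone mu := by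
    intro a b hab
    have hcast : (a : ℝ) ≤ (b : ℝ) := Nat.cast_le.mpr hab
    have h1 : ((b:ℝ) + 2)⁻¹ ≤ ((a:ℝ) + 2)⁻¹ :=
      inv_anti₀ (by positivity) (by linarith)
    simp only [hmudef]
    have h2 : 1 - ((a:ℝ) + 2)⁻¹ ≤ 1 - ((b:ℝ) + 2)⁻¹ := by linarith
    exact mul_le_mul_of_nonneg_left h2 hlstarpos.le
  have hmu_tend : Filter.Tendsto mu Filter.atTop (nhds lstar) := by
    have h1 : Filter.Tendsto (fun k : ℕ => ((k:ℝ) + 2)⁻¹) Filter.atTop (nhds 0) := by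
      apply Filter.Tendsto.inv_tendsto_atTop
      exact Filter.tendsto_atTop_add_const_right _ 2 tendsto_natCast_atTop_atTop
    have h2 := (Filter.Tendsto.const_sub (1:ℝ) h1).const_mul lstar
    simpa [hmudef] using h2
  have hrk_anti : ∀ i, Antitone fun k => Pf (mu k) i := by
    intro i a b hab
    exact hPmono (hmu_pos a) (hmu_mono hab) i
  have hrk_bdd : ∀ i, BddBelow (Set.range fun k => Pf (mu k) i) := by
    intro i
    refine ⟨0, ?_⟩
    rintro x ⟨k, rfl⟩
    exact hPf0 (hmu_pos k) i
  set r : Fin N → ℝ := fun i => ⨅ k, Pf (mu k) i with hrdef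
  have hr_tend : ∀ i, Filter.Tendsto (fun k => Pf (mu k) i) Filter.atTop (nhds (r i)) := by
    intro i
    simp only [hrdef]
    exact tendsto_atTop_ciInf (hrk_anti i) (hrk_bdd i)
  have hr_tendp : Filter.Tendsto (fun k => Pf (mu k)) Filter.atTop (nhds r) :=
    tendsto_pi_nhds.mpr hr_tend
  have hr0 : ∀ i, 0 ≤ r i := by
    intro i
    simp only [hrdef]
    exact le_ciInf fun k => hPf0 (hmu_pos k) i
  have hr_fp : ∀ i, r i = min (Tmap z σ r i / lstar) pmax := by
    intro i
    have t1 : Filter.Tendsto (fun k => min (Tmap z σ (Pf (mu k)) i / mu k) pmax)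
        Filter.atTop (nhds (min (Tmap z σ r i / lstar) pmax)) := by
      refine Filter.Tendsto.min ?_ tendsto_const_nhds
      exact Filter.Tendsto.div
        (((Tmap_continuous i).tendsto r).comp hr_tendp) hmu_tend hlstarpos.ne'
    have t2 : Filter.Tendsto (fun k => Pf (mu k) i) Filter.atTop
        (nhds (min (Tmap z σ r i / lstar) pmax)) :=
      t1.congr fun k => (hPfeq (hmu_pos k) i).symm
    exact tendsto_nhds_unique (hr_tend i) t2
  -- pigeonhole: some coordinate is maximal along the whole left sequence
  have hwit : ∀ k : ℕ, ∃ n, Pf (mu k) n = pmax :=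
    fun k => h_below (mu k) (hmu_pos k) (hmu_lt k)
  choose nk hnk using hwit
  obtain ⟨nstar, hfib⟩ := Finite.exists_infinite_fiber nk
  have hfibinf : (nk ⁻¹' {nstar} : Set ℕ).Infinite := Set.infinite_coe_iff.mp hfib
  have hall : ∀ k, Pf (mu k) nstar = pmax := by
    intro k
    obtain ⟨j, hj, hkj⟩ := hfibinf.exists_gt k
    have h1 : Pf (mu j) nstar = pmax := by
      have h2 : nk j = nstar := hj
      rw [← h2]
      exact hnk j
    refine le_antisymm (hPfle (hmu_pos k) nstar) ?_
    calc pmax = Pf (mu j) nstar := h1.symm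
      _ ≤ Pf (mu k) nstar := hrk_anti nstar hkj.le
  have hrmax : r nstar = pmax := by
    simp only [hrdef, hall]
    exact ciInf_const
  -- uniqueness of fixed points: q = r
  have hqr : ∀ i, q i = r i := fun i =>
    le_antisymm (fp_le hz hσ hpmax hlstarpos hq0 hr0 hq_fp hr_fp i)
      (fp_le hz hσ hpmax hlstarpos hr0 hq0 hr_fp hq_fp i)
  refine ⟨lstar, hlstarpos, q, hqpos, hqle, ⟨nstar, by rw [hqr nstar]; exact hrmax⟩, ?_⟩
  intro n
  show Tmap z σ q n = lstar * q n
  exact heig n
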